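/- arXiv:2402.04462 — 2 statements merged into one kernel-verified Lean document; each statement's English description precedes it below -/
import Mathlib

section
/- Let u, x : Fin m → K satisfy F(u) = 0 and F(x) = 0, and set y := (∇F(x)·u) • u − (∇F(u)·x) • x. Then F(y) = 0. Moreover, if u and x are linearly independent over K and (∇F(u)·x, ∇F(x)·u) ≠ (0,0), then y ≠ 0. (This shows that the map τ_u is a well-defined morphism on X ∖ C_u with values in X, where C_u is the union of lines on X through [u]; the indeterminacy points of τ_u are contained in C_u, Corollary 3.6(b) of the paper.) -/
open MvPolynomial Polynomial

lemma eval_smul_cubic {K : Type*} [Field K] {m : ℕ} {F : MvPolynomial (Fin m) K}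
    (hF : F.IsHomogeneous 3) (c : K) (v : Fin m → K) :
    MvPolynomial.eval (c • v) F = c ^ 3 * MvPolynomial.eval v F := by
  rw [MvPolynomial.eval_eq', MvPolynomial.eval_eq', Finset.mul_sum]
  apply Finset.sum_congr rfl
  intro d hd
  have hdeg : ∑ i, d i = 3 := by
    have h := hF (MvPolynomial.mem_support_iff.mp hd)
    rw [← h]
    simp [Finsupp.weight_apply, Finsupp.sum]
    exact (Finset.sum_subset (Finset.subset_univ _) (by
      intro i _ hi
      simpa using (Finsupp.notMem_support_iff.mp hi))).symm
  have : ∀ i : Fin m, (c • v) i ^ d i = c ^ d i * v i ^ d i := by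
    intro i; simp [mul_pow]
  simp_rw [this, Finset.prod_mul_distrib, Finset.prod_pow_eq_pow_sum, hdeg]
  ring

lemma natDegree_aeval_le_cubic {K : Type*} [Field K] {m : ℕ} {F : MvPolynomial (Fin m) K}
    (hF : F.IsHomogeneous 3) (g : Fin m → Polynomial K) (hg : ∀ i, (g i).natDegree ≤ 1) :
    (MvPolynomial.aeval g F).natDegree ≤ 3 := by
  rw [MvPolynomial.aeval_def, MvPolynomial.eval₂_eq]
  refine (Polynomial.natDegree_sum_le _ _).trans ?_
  rw [Finset.fold_max_le]
  refine ⟨by norm_num, ?_⟩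
  intro d hd
  have hdeg : ∑ i ∈ d.support, d i = 3 := by
    have h := hF (MvPolynomial.mem_support_iff.mp hd)
    rw [← h]
    simp [Finsupp.weight_apply, Finsupp.sum]
  calc (Function.comp Polynomial.natDegree
        (fun d => (algebraMap K (Polynomial K)) (MvPolynomial.coeff d F) *
          ∏ i ∈ d.support, g i ^ d i)) d
      ≤ ((algebraMap K (Polynomial K)) (MvPolynomial.coeff d F)).natDegree +
        (∏ i ∈ d.support, g i ^ d i).natDegree := Polynomial.natDegree_mul_le
    _ ≤ 0 + ∑ i ∈ d.support, (g i ^ d i).natDegree := by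
        gcongr
        · exact le_of_eq (Polynomial.natDegree_C _)
        · exact Polynomial.natDegree_prod_le _ _
    _ ≤ ∑ i ∈ d.support, d i * 1 := by
        rw [zero_add]
        refine Finset.sum_le_sum fun i _ => ?_
        exact (Polynomial.natDegree_pow_le).trans (Nat.mul_le_mul_left _ (hg i))
    _ = 3 := by simpa using hdeg

lemma eval_aeval_poly {K : Type*} [Field K] {m : ℕ} (F : MvPolynomial (Fin m) K)
    (g : Fin m → Polynomial K) (t : K) :
    (MvPolynomial.aeval g F).eval t = MvPolynomial.eval (fun i => (g i).eval t) F := by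
  rw [MvPolynomial.aeval_def]
  have h := MvPolynomial.eval₂_comp_left (Polynomial.evalRingHom t)
    (algebraMap K (Polynomial K)) g F
  simp only [Polynomial.coe_evalRingHom] at h
  rw [h]
  have h2 : (Polynomial.evalRingHom t).comp (algebraMap K (Polynomial K)) = RingHom.id K := by
    ext a; simp
  rw [h2, MvPolynomial.eval₂_id]
  rfl

lemma derivative_aeval {K : Type*} [Field K] {m : ℕ} (F : MvPolynomial (Fin m) K)
    (g : Fin m → Polynomial K) :
    Polynomial.derivative (MvPolynomial.aeval g F) =
      ∑ i, MvPolynomial.aeval g (MvPolynomial.pderiv i F) * Polynomial.derivative (g i) := by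
  induction F using MvPolynomial.induction_on with
  | C a => simp
  | add p q hp hq => simp [hp, hq, mul_add, add_mul, Finset.sum_add_distrib]
  | mul_X p n hp =>
      classical
      have h1 : ∀ i : Fin m,
          MvPolynomial.aeval g (MvPolynomial.pderiv i (p * MvPolynomial.X n)) *
            Polynomial.derivative (g i)
          = (MvPolynomial.aeval g (MvPolynomial.pderiv i p) * Polynomial.derivative (g i)) * g n
            + (if i = n then MvPolynomial.aeval g p * Polynomial.derivative (g i) else 0) := by
        intro i
        rw [MvPolynomial.pderiv_mul, MvPolynomial.pderiv_X]
        by_cases h : i = n <;> simp [h, Pi.single_apply] <;> ring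
      rw [Finset.sum_congr rfl (fun i _ => h1 i), Finset.sum_add_distrib, Finset.sum_ite_eq',
        ← Finset.sum_mul, ← hp]
      simp [Polynomial.derivative_mul]

/-- Key expansion lemma for a cubic vanishing at `u` and `x`. -/
lemma cubic_line_expansion {K : Type*} [Field K] [CharZero K] {m : ℕ}
    {F : MvPolynomial (Fin m) K} (hF : F.IsHomogeneous 3) (u x : Fin m → K)
    (hu : MvPolynomial.eval u F = 0) (hx : MvPolynomial.eval x F = 0) (s t : K) :
    MvPolynomial.eval (s • u + t • x) F =
      (∑ i, MvPolynomial.eval u (MvPolynomial.pderiv i F) * x i) * s ^ 2 * t +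
      (∑ i, MvPolynomial.eval x (MvPolynomial.pderiv i F) * u i) * s * t ^ 2 := by
  set B := ∑ i, MvPolynomial.eval u (MvPolynomial.pderiv i F) * x i with hB
  set A := ∑ i, MvPolynomial.eval x (MvPolynomial.pderiv i F) * u i with hA
  set g : Fin m → Polynomial K := fun i => Polynomial.C (u i) + Polynomial.C (x i) * Polynomial.X
    with hg
  set gq : Fin m → Polynomial K := fun i => Polynomial.C (x i) + Polynomial.C (u i) * Polynomial.X
    with hgq
  set P := MvPolynomial.aeval g F with hP
  set Q := MvPolynomial.aeval gq F with hQ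
  have hdeg1 : ∀ a b : K, (Polynomial.C a + Polynomial.C b * Polynomial.X).natDegree ≤ 1 := by
    intro a b
    refine (Polynomial.natDegree_add_le _ _).trans (max_le ?_ ?_)
    · simp
    · exact (Polynomial.natDegree_C_mul_le _ _).trans (by simp)
  have hgdeg : ∀ i, (g i).natDegree ≤ 1 := fun i => hdeg1 _ _
  have hgqdeg : ∀ i, (gq i).natDegree ≤ 1 := fun i => hdeg1 _ _
  have degP : P.natDegree ≤ 3 := natDegree_aeval_le_cubic hF g hgdeg
  have degQ : Q.natDegree ≤ 3 := natDegree_aeval_le_cubic hF gq hgqdeg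
  have evalP : ∀ r : K, P.eval r = MvPolynomial.eval (u + r • x) F := by
    intro r
    rw [hP, eval_aeval_poly]
    have : (fun i => (g i).eval r) = u + r • x := by
      funext i; simp [hg]; ring
    rw [this]
  have evalQ : ∀ r : K, Q.eval r = MvPolynomial.eval (x + r • u) F := by
    intro r
    rw [hQ, eval_aeval_poly]
    have : (fun i => (gq i).eval r) = x + r • u := by
      funext i; simp [hgq]; ring
    rw [this]
  have coeff1 : ∀ (v w : Fin m → K),
      ((MvPolynomial.aeval (fun i => Polynomial.C (v i) + Polynomial.C (w i) * Polynomial.X) F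
        : Polynomial K)).coeff 1
      = ∑ i, MvPolynomial.eval v (MvPolynomial.pderiv i F) * w i := by
    intro v w
    set gv : Fin m → Polynomial K :=
      fun i => Polynomial.C (v i) + Polynomial.C (w i) * Polynomial.X with hgv
    have hd : Polynomial.derivative (MvPolynomial.aeval gv F) =
        ∑ i, MvPolynomial.aeval gv (MvPolynomial.pderiv i F) * Polynomial.derivative (gv i) :=
      derivative_aeval F gv
    have h0 : (Polynomial.derivative (MvPolynomial.aeval gv F)).eval 0 =
        (MvPolynomial.aeval gv F).coeff 1 := by
      rw [← Polynomial.coeff_zero_eq_eval_zero, Polynomial.coeff_derivative]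
      ring
    rw [← h0, hd]
    rw [Polynomial.eval_finset_sum]
    apply Finset.sum_congr rfl
    intro i _
    rw [Polynomial.eval_mul, eval_aeval_poly]
    have : (fun j => (gv j).eval 0) = v := by funext j; simp [hgv]
    rw [this]
    simp [hgv]
  have coeffP0 : P.coeff 0 = 0 := by
    rw [Polynomial.coeff_zero_eq_eval_zero, evalP 0]
    simpa using hu
  have coeffQ0 : Q.coeff 0 = 0 := by
    rw [Polynomial.coeff_zero_eq_eval_zero, evalQ 0]
    simpa using hx
  have coeffP1 : P.coeff 1 = B := coeff1 u x
  have coeffQ1 : Q.coeff 1 = A := coeff1 x u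
  -- reflection: P = ∑ k in range 4, C (Q.coeff (3 - k)) * X ^ k
  set R : Polynomial K := ∑ k ∈ Finset.range 4, Polynomial.C (Q.coeff (3 - k)) * Polynomial.X ^ k
    with hR
  have hPR : P = R := by
    apply Polynomial.eq_of_infinite_eval_eq
    apply Set.Infinite.mono ?_ ((Set.finite_singleton (0:K)).infinite_compl)
    intro r hr
    have hr' : (r : K) ≠ 0 := hr
    have e1 : P.eval r = r ^ 3 * Q.eval r⁻¹ := by
      rw [evalP, evalQ]
      rw [← eval_smul_cubic hF r (x + r⁻¹ • u)]
      have : u + r • x = r • (x + r⁻¹ • u) := by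
        funext i
        simp only [Pi.add_apply, Pi.smul_apply, smul_eq_mul]
        have h5 : r * (x i + r⁻¹ * u i) = r * x i + (r * r⁻¹) * u i := by ring
        rw [h5, mul_inv_cancel₀ hr', one_mul, add_comm]
      rw [this]
    have e2 : Q.eval r⁻¹ = ∑ k ∈ Finset.range 4, Q.coeff k * r⁻¹ ^ k :=
      Polynomial.eval_eq_sum_range' (lt_of_le_of_lt degQ (by norm_num)) _
    have e3 : R.eval r = ∑ k ∈ Finset.range 4, Q.coeff (3 - k) * r ^ k := by
      rw [hR, Polynomial.eval_finset_sum]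
      simp
    rw [Set.mem_setOf_eq, e1, e2, e3, Finset.mul_sum]
    rw [← Finset.sum_range_reflect (fun k => Q.coeff (3 - k) * r ^ k) 4]
    apply Finset.sum_congr rfl
    intro k hk
    have hk4 : k < 4 := Finset.mem_range.mp hk
    have h3k : 3 - (4 - 1 - k) = k := by omega
    rw [h3k]
    have hpow : r ^ 3 * r⁻¹ ^ k = r ^ (4 - 1 - k) := by
      have h3 : (4 - 1 - k) + k = 3 := by omega
      rw [← h3, pow_add, mul_assoc, ← mul_pow, mul_inv_cancel₀ hr', one_pow, mul_one]
    rw [← mul_assoc, mul_comm (r ^ 3) (Q.coeff k), mul_assoc, hpow]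

  have coeffR : ∀ n, n < 4 → R.coeff n = Q.coeff (3 - n) := by
    intro n hn
    rw [hR, Polynomial.finset_sum_coeff]
    simp only [Polynomial.coeff_C_mul, Polynomial.coeff_X_pow, mul_ite, mul_one, mul_zero]
    rw [Finset.sum_ite_eq (Finset.range 4) n (fun k => Q.coeff (3 - k))]
    simp [Finset.mem_range.mpr hn]
  have coeffP2 : P.coeff 2 = A := by
    rw [hPR, coeffR 2 (by norm_num)]
    simpa using coeffQ1
  have coeffP3 : P.coeff 3 = 0 := by
    rw [hPR, coeffR 3 (by norm_num)]
    simpa using coeffQ0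
  have coeffP0' : P.coeff 0 = 0 := by rw [hPR] at coeffP0 ⊢; exact coeffP0
  have coeffP1' : P.coeff 1 = B := by rw [hPR] at coeffP1 ⊢; exact coeffP1
  have key : ∀ r : K, MvPolynomial.eval (u + r • x) F = B * r + A * r ^ 2 := by
    intro r
    have hdegP4 : P.natDegree < 4 := lt_of_le_of_lt degP (by norm_num)
    rw [← evalP r, Polynomial.eval_eq_sum_range' hdegP4 r]
    rw [Finset.sum_range_succ, Finset.sum_range_succ, Finset.sum_range_succ,
      Finset.sum_range_one]
    rw [coeffP0, coeffP1, coeffP2, coeffP3]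
    ring
  by_cases hs : s = 0
  · subst hs
    rw [show ((0:K) • u + t • x) = t • x by simp]
    rw [eval_smul_cubic hF t x, hx]
    ring
  · have hsplit : s • u + t • x = s • (u + (t / s) • x) := by
      funext i
      simp only [Pi.add_apply, Pi.smul_apply, smul_eq_mul]
      field_simp
    rw [hsplit, eval_smul_cubic hF, key]
    field_simp

/-- The map `τ_u` is well defined on `X ∖ C_u` with values in `X`: for `F(u) = F(x) = 0` and
`y := (∇F(x)·u) • u − (∇F(u)·x) • x`, one has `F(y) = 0`; and `y ≠ 0` when `u, x` are
linearly independent and `(∇F(u)·x, ∇F(x)·u) ≠ (0,0)`. -/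
theorem tau_u_well_defined {K : Type*} [Field K] [CharZero K] {m : ℕ} (hm : 1 ≤ m)
    (F : MvPolynomial (Fin m) K) (hF : F.IsHomogeneous 3)
    (u x : Fin m → K)
    (hu : MvPolynomial.eval u F = 0) (hx : MvPolynomial.eval x F = 0) :
    MvPolynomial.eval
        ((∑ i, MvPolynomial.eval x (MvPolynomial.pderiv i F) * u i) • u -
          (∑ i, MvPolynomial.eval u (MvPolynomial.pderiv i F) * x i) • x) F = 0 ∧
      (LinearIndependent K ![u, x] →
        ((∑ i, MvPolynomial.eval u (MvPolynomial.pderiv i F) * x i),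
          (∑ i, MvPolynomial.eval x (MvPolynomial.pderiv i F) * u i)) ≠ (0, 0) →
        (∑ i, MvPolynomial.eval x (MvPolynomial.pderiv i F) * u i) • u -
          (∑ i, MvPolynomial.eval u (MvPolynomial.pderiv i F) * x i) • x ≠ 0) := by
  set B := ∑ i, MvPolynomial.eval u (MvPolynomial.pderiv i F) * x i with hB
  set A := ∑ i, MvPolynomial.eval x (MvPolynomial.pderiv i F) * u i with hA
  have hsub : A • u - B • x = A • u + (-B) • x := by
    rw [sub_eq_add_neg, neg_smul]
  constructor
  · rw [hsub, cubic_line_expansion hF u x hu hx A (-B)]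
    ring
  · intro hli hne h0
    rw [hsub] at h0
    obtain ⟨hA0, hB0⟩ := (LinearIndependent.pair_iff.mp hli) A (-B) h0
    apply hne
    rw [Prod.mk.injEq]
    exact ⟨by simpa using hB0, hA0⟩
end

section
/- Let u, x, x' : Fin m → K satisfy F(u) = F(x) = F(x') = 0, with u, x linearly independent and u, x' linearly independent over K, and suppose ∇F(u)·x ≠ 0 and ∇F(x)·u ≠ 0. If there exists c ∈ K, c ≠ 0, such that (∇F(x')·u) • u − (∇F(u)·x') • x' = c • ((∇F(x)·u) • u − (∇F(u)·x) • x), then there exists d ∈ K, d ≠ 0, with x' = d • x. (Lemma 3.5 / Corollary 3.6(c) of the paper: the involution τ_u acts injectively, indeed freely, on X ∖ (S_u ∪ S_u*).) -/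
open MvPolynomial Finset

/-- Directional-derivative sum for a scaled triple product of variables. -/
private lemma sum_pderiv_tri {K : Type*} [Field K] {m : ℕ} (r : K) (a b c : Fin m)
    (v w : Fin m → K) :
    (∑ i, MvPolynomial.eval v (MvPolynomial.pderiv i
        (MvPolynomial.C r * MvPolynomial.X a * MvPolynomial.X b * MvPolynomial.X c)) * w i)
      = r * (w a * v b * v c + v a * w b * v c + v a * v b * w c) := by
  classical
  have : ∀ i : Fin m,
      MvPolynomial.eval v (MvPolynomial.pderiv i
        (MvPolynomial.C r * MvPolynomial.X a * MvPolynomial.X b * MvPolynomial.X c)) * w i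
      = r * (((if a = i then (1:K) else 0) * v b * v c
          + v a * (if b = i then (1:K) else 0) * v c
          + v a * v b * (if c = i then (1:K) else 0)) * w i) := by
    intro i
    simp [pderiv_mul, pderiv_X, Pi.single_apply, apply_ite (MvPolynomial.eval v)]
    split_ifs <;> ring
  rw [Finset.sum_congr rfl fun i _ => this i, ← Finset.mul_sum]
  congr 1
  simp only [add_mul, Finset.sum_add_distrib, ite_mul, one_mul, zero_mul, mul_ite, mul_zero,
    mul_one]
  rw [Finset.sum_ite_eq Finset.univ a, Finset.sum_ite_eq Finset.univ b,
    Finset.sum_ite_eq Finset.univ c]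
  simp
  ring

/-- Restriction of a homogeneous cubic to a plane: full polarization expansion. -/
private lemma cubic_expand {K : Type*} [Field K] {m : ℕ}
    (F : MvPolynomial (Fin m) K) (hF : F.IsHomogeneous 3)
    (v w : Fin m → K) (s t : K) :
    MvPolynomial.eval (s • v + t • w) F =
      s ^ 3 * MvPolynomial.eval v F
      + s ^ 2 * t * (∑ i, MvPolynomial.eval v (MvPolynomial.pderiv i F) * w i)
      + s * t ^ 2 * (∑ i, MvPolynomial.eval w (MvPolynomial.pderiv i F) * v i)
      + t ^ 3 * MvPolynomial.eval w F := by
  classical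
  set Claim : MvPolynomial (Fin m) K → Prop := fun p =>
    MvPolynomial.eval (s • v + t • w) p =
      s ^ 3 * MvPolynomial.eval v p
      + s ^ 2 * t * (∑ i, MvPolynomial.eval v (MvPolynomial.pderiv i p) * w i)
      + s * t ^ 2 * (∑ i, MvPolynomial.eval w (MvPolynomial.pderiv i p) * v i)
      + t ^ 3 * MvPolynomial.eval w p with hClaim
  have hzero : Claim 0 := by simp [hClaim]
  have hadd : ∀ p q, Claim p → Claim q → Claim (p + q) := by
    intro p q hp hq
    simp only [hClaim, map_add, add_mul, mul_add, Finset.sum_add_distrib] at *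
    rw [hp, hq]; ring
  have hmono : ∀ d : Fin m →₀ ℕ, (Finsupp.toMultiset d).card = 3 → ∀ r : K,
      Claim (MvPolynomial.monomial d r) := by
    intro d hd r
    obtain ⟨a, b, c, habc⟩ := Multiset.card_eq_three.mp hd
    have hdval : d = Finsupp.single a 1 + Finsupp.single b 1 + Finsupp.single c 1 := by
      have : Multiset.toFinsupp (Finsupp.toMultiset d) = d := Finsupp.toMultiset_toFinsupp d
      rw [habc] at this
      rw [← this]
      show Multiset.toFinsupp (a ::ₘ b ::ₘ {c}) = _
      rw [← Multiset.singleton_add, ← Multiset.singleton_add, Multiset.toFinsupp_add,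
        Multiset.toFinsupp_add, Multiset.toFinsupp_singleton, Multiset.toFinsupp_singleton,
        Multiset.toFinsupp_singleton, add_assoc]
    have hmon : (MvPolynomial.monomial d r : MvPolynomial (Fin m) K)
        = MvPolynomial.C r * MvPolynomial.X a * MvPolynomial.X b * MvPolynomial.X c := by
      have hX : (MvPolynomial.C r * MvPolynomial.X a * MvPolynomial.X b * MvPolynomial.X c
          : MvPolynomial (Fin m) K)
          = MvPolynomial.monomial
              (Finsupp.single a 1 + Finsupp.single b 1 + Finsupp.single c 1) r := by
        rw [MvPolynomial.C_apply, MvPolynomial.X, MvPolynomial.X, MvPolynomial.X,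
          MvPolynomial.monomial_mul, MvPolynomial.monomial_mul, MvPolynomial.monomial_mul]
        simp
      rw [hdval, hX]
    rw [hClaim]
    simp only [hmon]
    rw [sum_pderiv_tri r a b c v w, sum_pderiv_tri r a b c w v]
    simp only [MvPolynomial.eval_mul, MvPolynomial.eval_C, MvPolynomial.eval_X, Pi.add_apply,
      Pi.smul_apply, smul_eq_mul]
    ring
  have hsum : ∀ (S : Finset (Fin m →₀ ℕ)), (∀ d ∈ S, (Finsupp.toMultiset d).card = 3) →
      ∀ (φ : (Fin m →₀ ℕ) → K), Claim (∑ d ∈ S, MvPolynomial.monomial d (φ d)) := by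
    intro S
    induction S using Finset.induction_on with
    | empty => intro _ φ; simpa using hzero
    | insert _ _ hnotmem ih =>
      intro hmem φ
      rw [Finset.sum_insert hnotmem]
      exact hadd _ _ (hmono _ (hmem _ (Finset.mem_insert_self _ _)) _)
        (ih (fun d hd => hmem d (Finset.mem_insert_of_mem hd)) φ)
  have hdeg : ∀ d ∈ F.support, (Finsupp.toMultiset d).card = 3 := by
    intro d hd
    have h3 := hF (MvPolynomial.mem_support_iff.mp hd)
    rw [Finsupp.card_toMultiset]
    simpa [Finsupp.weight_apply, Finsupp.sum] using h3
  have := hsum F.support hdeg (fun d => MvPolynomial.coeff d F)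
  rwa [← MvPolynomial.as_sum F] at this

/-- `τ_u` acts injectively on `X ∖ (S_u ∪ S_u*)`: if `τ_u(x)` and `τ_u(x')` agree up to a
nonzero scalar (in cone coordinates), then `x'` is a nonzero scalar multiple of `x`. -/
theorem tau_u_injective {K : Type*} [Field K] [CharZero K] {m : ℕ} (hm : 1 ≤ m)
    (F : MvPolynomial (Fin m) K) (hF : F.IsHomogeneous 3)
    (u x x' : Fin m → K)
    (hu : MvPolynomial.eval u F = 0) (hx : MvPolynomial.eval x F = 0)
    (hx' : MvPolynomial.eval x' F = 0)
    (hind : LinearIndependent K ![u, x]) (hind' : LinearIndependent K ![u, x'])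
    (h1 : (∑ i, MvPolynomial.eval u (MvPolynomial.pderiv i F) * x i) ≠ 0)
    (h2 : (∑ i, MvPolynomial.eval x (MvPolynomial.pderiv i F) * u i) ≠ 0)
    (hc : ∃ c : K, c ≠ 0 ∧
      (∑ i, MvPolynomial.eval x' (MvPolynomial.pderiv i F) * u i) • u -
          (∑ i, MvPolynomial.eval u (MvPolynomial.pderiv i F) * x' i) • x' =
        c • ((∑ i, MvPolynomial.eval x (MvPolynomial.pderiv i F) * u i) • u -
          (∑ i, MvPolynomial.eval u (MvPolynomial.pderiv i F) * x i) • x)) :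
    ∃ d : K, d ≠ 0 ∧ x' = d • x := by
  obtain ⟨c, hc0, hceq⟩ := hc
  set A := (∑ i, MvPolynomial.eval x (MvPolynomial.pderiv i F) * u i) with hA
  set B := (∑ i, MvPolynomial.eval u (MvPolynomial.pderiv i F) * x i) with hB
  set A' := (∑ i, MvPolynomial.eval x' (MvPolynomial.pderiv i F) * u i) with hA'
  set B' := (∑ i, MvPolynomial.eval u (MvPolynomial.pderiv i F) * x' i) with hB'
  have hpt : ∀ i, A' * u i - B' * x' i = c * (A * u i - B * x i) := by
    intro i
    have h := congrFun hceq i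
    simp only [Pi.sub_apply, Pi.smul_apply, smul_eq_mul] at h
    linear_combination h
  have hpair := LinearIndependent.pair_iff.mp hind
  -- Step 1: B' ≠ 0
  have hB'0 : B' ≠ 0 := by
    intro h0
    have hvec : (A' - c * A) • u + (c * B) • x = 0 := by
      funext i
      have := hpt i
      rw [h0] at this
      simp only [Pi.add_apply, Pi.smul_apply, smul_eq_mul, Pi.zero_apply]
      linear_combination this
    have hCB := (hpair _ _ hvec).2
    rcases mul_eq_zero.mp hCB with h | h
    · exact hc0 h
    · exact h1 h
  -- Step 2: x' = a • u + b • x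
  obtain ⟨a, b, ha, hb⟩ : ∃ a b : K, a = (A' - c * A) / B' ∧ b = c * B / B' :=
    ⟨_, _, rfl, rfl⟩
  have hx'ab : x' = a • u + b • x := by
    funext i
    have h := hpt i
    simp only [Pi.add_apply, Pi.smul_apply, smul_eq_mul]
    rw [ha, hb]
    field_simp
    linear_combination -h
  have ha4 : B' * a = A' - c * A := by
    rw [ha]; field_simp
  have hb5 : B' * b = c * B := by
    rw [hb]; field_simp
  -- Step 3: polarization identities
  have e1 : (0:K) = a ^ 2 * b * B + a * b ^ 2 * A := by
    have l := cubic_expand F hF u x a b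
    rw [← hx'ab, hx', hu, hx, ← hB, ← hA] at l
    linear_combination l
  have hplus : (1:K) • x' + (1:K) • u = (a + 1) • u + b • x := by
    funext i
    have h := congrFun hx'ab i
    simp only [Pi.add_apply, Pi.smul_apply, smul_eq_mul] at h ⊢
    linear_combination h
  have hminus : (1:K) • x' + (-1:K) • u = (a - 1) • u + b • x := by
    funext i
    have h := congrFun hx'ab i
    simp only [Pi.add_apply, Pi.smul_apply, smul_eq_mul] at h ⊢
    linear_combination h
  have e2 : A' + B' = (a + 1) ^ 2 * b * B + (a + 1) * b ^ 2 * A := by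
    have l := cubic_expand F hF x' u 1 1
    rw [hplus, cubic_expand F hF u x (a + 1) b] at l
    rw [hx', hu, hx, ← hA', ← hB', ← hB, ← hA] at l
    linear_combination -l
  have e3 : -A' + B' = (a - 1) ^ 2 * b * B + (a - 1) * b ^ 2 * A := by
    have l := cubic_expand F hF x' u 1 (-1)
    rw [hminus, cubic_expand F hF u x (a - 1) b] at l
    rw [hx', hu, hx, ← hA', ← hB', ← hB, ← hA] at l
    linear_combination -l
  have hA'val : A' = 2 * a * b * B + b ^ 2 * A := by
    linear_combination (e2 - e3) / 2
  have hB'b : B' = b * B := by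
    linear_combination (e2 + e3) / 2 - e1
  have hb0 : b ≠ 0 := by
    intro h
    exact hB'0 (by rw [hB'b, h, zero_mul])
  have hc2 : b ^ 2 = c := by
    have hz : (b ^ 2 - c) * B = 0 := by linear_combination hb5 - b * hB'b
    rcases mul_eq_zero.mp hz with h | h
    · exact sub_eq_zero.mp h
    · exact absurd h h1
  have key : a * (b * B) = 0 := by
    linear_combination -ha4 + a * hB'b - hA'val - A * hc2
  have ha0 : a = 0 := by
    rcases mul_eq_zero.mp key with h | h
    · exact h
    · exact absurd h (mul_ne_zero hb0 h1)
  refine ⟨b, hb0, ?_⟩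
  rw [hx'ab, ha0]
  funext i
  simp
end
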